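/- arXiv:1911.12960 — 4 statements merged into one kernel-verified Lean document; each statement's English description precedes it below -/
import Mathlib

section
/- A system of t functions f_1,…,f_t : Q^s → Q is strong-orthogonal if and only if the set C = {(x_1,…,x_s, f_1(x),…,f_t(x)) : x ∈ Q^s} is an MDS(t, t+s, q) code. -/
lemma fin_split (s t : ℕ) (k : Fin (s + t)) :
    (∃ i, Fin.castAdd t i = k) ∨ (∃ j, Fin.natAdd s j = k) := by
  induction k using Fin.addCases with
  | left i => exact Or.inl ⟨i, rfl⟩
  | right j => exact Or.inr ⟨j, rfl⟩

lemma card_split (s t : ℕ) (S : Finset (Fin (s + t))) :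
    (Finset.univ.filter (fun i : Fin s => Fin.castAdd t i ∈ S)).card
      + (Finset.univ.filter (fun j : Fin t => Fin.natAdd s j ∈ S)).card = S.card := by
  classical
  have h : ((Finset.univ.filter (fun i : Fin s => Fin.castAdd t i ∈ S)).disjSum
      (Finset.univ.filter (fun j : Fin t => Fin.natAdd s j ∈ S))).map
      finSumFinEquiv.toEmbedding = S := by
    ext k
    simp only [Finset.mem_map, Finset.mem_disjSum, Finset.mem_filter, Finset.mem_univ, true_and]
    constructor
    · rintro ⟨u, hu, rfl⟩
      rcases u with i | j
      · rcases hu with ⟨i', hi', h'⟩ | ⟨j', hj', h'⟩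
        · cases h'; simpa using hi'
        · cases h'
      · rcases hu with ⟨i', hi', h'⟩ | ⟨j', hj', h'⟩
        · cases h'
        · cases h'; simpa using hj'
    · intro hk
      rcases fin_split s t k with ⟨i, rfl⟩ | ⟨j, rfl⟩
      · exact ⟨Sum.inl i, Or.inl ⟨i, hk, rfl⟩, by simp⟩
      · exact ⟨Sum.inr j, Or.inr ⟨j, hk, rfl⟩, by simp⟩
  calc _ = _ := (Finset.card_disjSum _ _).symm
    _ = _ := (Finset.card_map _).symm
    _ = S.card := by rw [h]

def IsMDS {Q : Type} (t d : ℕ) (C : Finset (Fin d → Q)) : Prop :=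
  ∀ S : Finset (Fin d), S.card = d - t → ∀ a : Fin d → Q,
    ∃! x, x ∈ C ∧ ∀ i ∈ S, x i = a i

def StrongOrthogonal {Q : Type} (s t : ℕ) (f : Fin t → (Fin s → Q) → Q) : Prop :=
  ∀ (T : Finset (Fin s)) (I : Finset (Fin t)), T.card + I.card = s →
    ∀ (c : Fin s → Q) (b : Fin t → Q),
      ∃! x : Fin s → Q, (∀ i ∈ T, x i = c i) ∧ (∀ j ∈ I, f j x = b j)

/-- the system `f_1, …, f_t` is strong-orthogonal iff the graph
`C = {(x, f_1(x), …, f_t(x)) : x ∈ Q^s}` is an MDS(t, s+t, q) code. -/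
theorem stmt_2 {Q : Type} [Fintype Q] [DecidableEq Q] (s t : ℕ)
    (f : Fin t → (Fin s → Q) → Q) :
    StrongOrthogonal s t f ↔
      IsMDS t (s + t) ((Finset.univ : Finset (Fin s → Q)).image
        fun x => Fin.addCases (motive := fun _ => Q) x (fun j => f j x)) := by
  classical
  set g : (Fin s → Q) → (Fin (s + t) → Q) :=
    fun x => Fin.addCases (motive := fun _ => Q) x (fun j => f j x) with hg
  have hgl : ∀ (x : Fin s → Q) (i : Fin s), g x (Fin.castAdd t i) = x i := by
    intro x i; simp [hg]
  have hgr : ∀ (x : Fin s → Q) (j : Fin t), g x (Fin.natAdd s j) = f j x := by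
    intro x j; simp [hg]
  have hginj : Function.Injective g := by
    intro x y h
    funext i
    rw [← hgl x i, ← hgl y i, h]
  constructor
  · intro hSO S hS a
    set T := Finset.univ.filter (fun i : Fin s => Fin.castAdd t i ∈ S) with hT
    set I := Finset.univ.filter (fun j : Fin t => Fin.natAdd s j ∈ S) with hI
    have hcard : T.card + I.card = s := by
      rw [hT, hI, card_split, hS]; omega
    obtain ⟨x, ⟨hxT, hxI⟩, hxu⟩ :=
      hSO T I hcard (fun i => a (Fin.castAdd t i)) (fun j => a (Fin.natAdd s j))
    refine ⟨g x, ⟨Finset.mem_image_of_mem _ (Finset.mem_univ x), ?_⟩, ?_⟩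
    · intro k hk
      rcases fin_split s t k with ⟨i, rfl⟩ | ⟨j, rfl⟩
      · rw [hgl]
        exact hxT i (by simp [hT, hk])
      · rw [hgr]
        exact hxI j (by simp [hI, hk])
    · rintro y ⟨hyC, hyS⟩
      obtain ⟨x', -, rfl⟩ := Finset.mem_image.mp hyC
      refine congrArg g (hxu x' ⟨?_, ?_⟩)
      · intro i hi
        have hiS : Fin.castAdd t i ∈ S := by
          simpa [hT] using hi
        rw [← hgl x' i]
        exact hyS _ hiS
      · intro j hj
        have hjS : Fin.natAdd s j ∈ S := by
          simpa [hI] using hj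
        rw [← hgr x' j]
        exact hyS _ hjS
  · intro hM T I hTI c b
    set S : Finset (Fin (s + t)) := (T.disjSum I).map finSumFinEquiv.toEmbedding with hS
    have hTmem : ∀ i ∈ T, Fin.castAdd t i ∈ S := by
      intro i hi
      rw [hS]
      exact Finset.mem_map.mpr ⟨Sum.inl i, Finset.inl_mem_disjSum.mpr hi, by simp⟩
    have hImem : ∀ j ∈ I, Fin.natAdd s j ∈ S := by
      intro j hj
      rw [hS]
      exact Finset.mem_map.mpr ⟨Sum.inr j, Finset.inr_mem_disjSum.mpr hj, by simp⟩
    have hScard : S.card = s + t - t := by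
      rw [hS, Finset.card_map, Finset.card_disjSum, hTI]; omega
    set a : Fin (s + t) → Q := Fin.addCases (motive := fun _ => Q) c b with ha
    have hal : ∀ i : Fin s, a (Fin.castAdd t i) = c i := by intro i; rw [ha]; exact Fin.addCases_left i
    have har : ∀ j : Fin t, a (Fin.natAdd s j) = b j := by intro j; rw [ha]; exact Fin.addCases_right j
    obtain ⟨y, ⟨hyC, hyS⟩, hyu⟩ := hM S hScard a
    obtain ⟨x, -, rfl⟩ := Finset.mem_image.mp hyC
    have key : ∀ x' : Fin s → Q,
        ((∀ i ∈ T, x' i = c i) ∧ (∀ j ∈ I, f j x' = b j)) ↔ (∀ k ∈ S, g x' k = a k) := by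
      intro x'
      constructor
      · rintro ⟨h1, h2⟩ k hk
        rw [hS] at hk
        obtain ⟨u, hu, rfl⟩ := Finset.mem_map.mp hk
        rcases u with i | j
        · have hi : i ∈ T := Finset.inl_mem_disjSum.mp hu
          simp only [Equiv.coe_toEmbedding, finSumFinEquiv_apply_left]
          rw [hgl, hal]
          exact h1 i hi
        · have hj : j ∈ I := Finset.inr_mem_disjSum.mp hu
          simp only [Equiv.coe_toEmbedding, finSumFinEquiv_apply_right]
          rw [hgr, har]
          exact h2 j hj
      · intro h
        constructor
        · intro i hi
          rw [← hgl x' i, ← hal i]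
          exact h _ (hTmem i hi)
        · intro j hj
          rw [← hgr x' j, ← har j]
          exact h _ (hImem j hj)
    refine ⟨x, (key x).mpr hyS, ?_⟩
    rintro x' hx'
    apply hginj
    exact hyu (g x') ⟨Finset.mem_image_of_mem _ (Finset.mem_univ x'), (key x').mp hx'⟩
end

section
/- Under the hypotheses: M_2 ⊂ M_1 ⊂ M is a super MDS(2,5,p) code (M has distance 3, M_1 distance 4, M_2 distance 5); D is an MDS(2,5,q) code over Q_q; E is an MDS(2,5,q_1−q) code over alphabet A with |A| = q_1 − q; F is an MDS(2,5,q_1) code with 4-A-hole over Q_q ∪ A; G is an MDS(2,5,q_1) code with 5-A-hole over Q_q ∪ A — the set C = E ∪ (M_2 ×_A G) ∪ ((M_1 \ M_2) ×_A F) ∪ ((M \ M_1) × D) is an MDS(2,5,(p−1)q + q_1) code. -/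
open Finset

/-- The Hamming `k`-neighborhood of a set `C ⊆ Q^d`. -/
def hammingNbhd {Q : Type} [DecidableEq Q] {d : ℕ} (k : ℕ) (C : Set (Fin d → Q)) :
    Set (Fin d → Q) :=
  {x | ∃ y ∈ C, hammingDist x y ≤ k}

/-- The gluing product `×_A` of the paper, coordinatewise `π_A`:
the alphabet `Q_{q₁}` is modelled as `Fin q ⊕ Fin a` (with `A = Fin a`, `a = q₁ - q`),
and `π_A(x,y) = (x,y)` if `y ∉ A`, `π_A(x,y) = y` if `y ∈ A`;
the resulting alphabet is `(Fin p × Fin q) ⊕ Fin a`, of size `pq + (q₁ - q)`. -/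
def glue (p q a : ℕ) (z : (Fin 5 → Fin p) × (Fin 5 → Fin q ⊕ Fin a)) :
    Fin 5 → (Fin p × Fin q) ⊕ Fin a := fun i =>
  match z.2 i with
  | Sum.inl y => Sum.inl (z.1 i, y)
  | Sum.inr b => Sum.inr b

private lemma card_le_hd {α : Type} [DecidableEq α] {n : ℕ} {x y : Fin n → α}
    (s : Finset (Fin n)) (h : ∀ i ∈ s, x i ≠ y i) : s.card ≤ hammingDist x y :=
  Finset.card_le_card (fun i hi => Finset.mem_filter.2 ⟨Finset.mem_univ i, h i hi⟩)

private lemma rightset_bound {q a k : ℕ} (w : Fin 5 → Fin q ⊕ Fin a) (hk : k ≤ 4)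
    (h : ∀ z : Fin 5 → Fin q ⊕ Fin a, (∀ i, (z i).isRight) → k + 1 ≤ hammingDist w z) :
    (univ.filter fun i => (w i).isRight).card ≤ 4 - k := by
  by_cases hne : (univ.filter fun i => (w i).isRight).Nonempty
  · obtain ⟨i₀, hi₀⟩ := hne
    have hr : (w i₀).isRight := (Finset.mem_filter.1 hi₀).2
    obtain ⟨b₀, hb₀⟩ := Sum.isRight_iff.1 hr
    set z : Fin 5 → Fin q ⊕ Fin a := fun i => if (w i).isRight then w i else Sum.inr b₀ with hz
    have hzr : ∀ i, (z i).isRight := by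
      intro i
      by_cases hwi : (w i).isRight <;> simp [hz, hwi]
    have hdist : hammingDist w z ≤ 5 - (univ.filter fun i => (w i).isRight).card := by
      have hsub : (univ.filter fun i => w i ≠ z i) ⊆
          univ \ (univ.filter fun i => (w i).isRight) := by
        intro i hi
        have hne' := (Finset.mem_filter.1 hi).2
        simp only [Finset.mem_sdiff, Finset.mem_univ, Finset.mem_filter, true_and]
        intro hri
        exact hne' (by simp [hz, hri])
      calc hammingDist w z ≤ (univ \ (univ.filter fun i => (w i).isRight)).card :=
            Finset.card_le_card hsub
        _ = 5 - (univ.filter fun i => (w i).isRight).card := by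
            rw [Finset.card_sdiff_of_subset (Finset.subset_univ _)]; simp
    have := h z hzr
    have hcard5 : (univ.filter fun i => (w i).isRight).card ≤ 5 := by
      calc _ ≤ (univ : Finset (Fin 5)).card := Finset.card_le_card (Finset.filter_subset _ _)
        _ = 5 := by simp
    omega
  · rw [Finset.not_nonempty_iff_eq_empty] at hne
    rw [hne]; simp

private lemma glue_eq_pt {p q a : ℕ} {m m' : Fin 5 → Fin p} {z z' : Fin 5 → Fin q ⊕ Fin a}
    {i : Fin 5} (h : glue p q a (m, z) i = glue p q a (m', z') i) :
    z i = z' i ∧ ((z i).isRight ∨ m i = m' i) := by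
  rcases hz : z i with y | b <;> rcases hz' : z' i with y' | b' <;>
    simp_all [glue]

private lemma glue_ne_of_z {p q a : ℕ} {m m' : Fin 5 → Fin p} {z z' : Fin 5 → Fin q ⊕ Fin a}
    {i : Fin 5} (h : z i ≠ z' i) : glue p q a (m, z) i ≠ glue p q a (m', z') i :=
  fun he => h (glue_eq_pt he).1

private lemma glue_ne_of_m {p q a : ℕ} {m m' : Fin 5 → Fin p} {z z' : Fin 5 → Fin q ⊕ Fin a}
    {i : Fin 5} (hm : m i ≠ m' i) (hr : ¬ (z i).isRight) :
    glue p q a (m, z) i ≠ glue p q a (m', z') i := by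
  intro he
  rcases (glue_eq_pt he).2 with h | h
  · exact hr h
  · exact hm h

private lemma glue_ne_inl {p q a : ℕ} {m m' : Fin 5 → Fin p} {z : Fin 5 → Fin q ⊕ Fin a}
    {d : Fin 5 → Fin q} {i : Fin 5} (hm : m i ≠ m' i) :
    glue p q a (m, z) i ≠ Sum.inl (m' i, d i) := by
  rcases hz : z i with y | b <;> simp_all [glue]

private lemma glue_ne_inr {p q a : ℕ} {m : Fin 5 → Fin p} {z : Fin 5 → Fin q ⊕ Fin a}
    {e : Fin 5 → Fin a} {i : Fin 5} (hz' : z i ≠ Sum.inr (e i)) :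
    glue p q a (m, z) i ≠ Sum.inr (e i) := by
  rcases hz : z i with y | b <;> simp_all [glue]

private lemma glue_dist_z {p q a : ℕ} (m m' : Fin 5 → Fin p) (z z' : Fin 5 → Fin q ⊕ Fin a) :
    hammingDist z z' ≤ hammingDist (glue p q a (m, z)) (glue p q a (m', z')) := by
  calc hammingDist z z' = (univ.filter fun i => z i ≠ z' i).card := rfl
    _ ≤ _ := card_le_hd _ (fun i hi => glue_ne_of_z (Finset.mem_filter.1 hi).2)

private lemma glue_dist_m {p q a : ℕ} (m m' : Fin 5 → Fin p) (z z' : Fin 5 → Fin q ⊕ Fin a) :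
    hammingDist m m' - (univ.filter fun i => (z i).isRight).card
      ≤ hammingDist (glue p q a (m, z)) (glue p q a (m', z')) := by
  have h1 : ((univ.filter fun i => m i ≠ m' i) \ (univ.filter fun i => (z i).isRight)).card
      ≤ hammingDist (glue p q a (m, z)) (glue p q a (m', z')) := by
    apply card_le_hd
    intro i hi
    rw [Finset.mem_sdiff, Finset.mem_filter] at hi
    exact glue_ne_of_m hi.1.2 (fun hr => hi.2 (Finset.mem_filter.2 ⟨Finset.mem_univ i, hr⟩))
  calc hammingDist m m' - (univ.filter fun i => (z i).isRight).card
      = (univ.filter fun i => m i ≠ m' i).card - (univ.filter fun i => (z i).isRight).card := rfl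
    _ ≤ ((univ.filter fun i => m i ≠ m' i) \ (univ.filter fun i => (z i).isRight)).card :=
        Finset.le_card_sdiff _ _
    _ ≤ _ := h1

private lemma glue_dist_inl {p q a : ℕ} (m m' : Fin 5 → Fin p) (z : Fin 5 → Fin q ⊕ Fin a)
    (d : Fin 5 → Fin q) :
    hammingDist m m' ≤
      hammingDist (glue p q a (m, z)) (fun i => (Sum.inl (m' i, d i) : (Fin p × Fin q) ⊕ Fin a)) := by
  calc hammingDist m m' = (univ.filter fun i => m i ≠ m' i).card := rfl
    _ ≤ _ := card_le_hd _ (fun i hi => glue_ne_inl (Finset.mem_filter.1 hi).2)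

private lemma glue_dist_inr {p q a : ℕ} (m : Fin 5 → Fin p) (z : Fin 5 → Fin q ⊕ Fin a)
    (e : Fin 5 → Fin a) :
    hammingDist z (fun i => Sum.inr (e i)) ≤
      hammingDist (glue p q a (m, z)) (fun i => (Sum.inr (e i) : (Fin p × Fin q) ⊕ Fin a)) := by
  calc hammingDist z (fun i => Sum.inr (e i))
      = (univ.filter fun i => z i ≠ Sum.inr (e i)).card := rfl
    _ ≤ _ := card_le_hd _ (fun i hi => glue_ne_inr (Finset.mem_filter.1 hi).2)

private lemma glue_inj_aux {p q a : ℕ} {m m' : Fin 5 → Fin p} {z z' : Fin 5 → Fin q ⊕ Fin a}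
    (h : glue p q a (m, z) = glue p q a (m', z')) :
    z = z' ∧ hammingDist m m' ≤ (univ.filter fun i => (z i).isRight).card := by
  have hpt : ∀ i, z i = z' i ∧ ((z i).isRight ∨ m i = m' i) :=
    fun i => glue_eq_pt (congrFun h i)
  refine ⟨funext fun i => (hpt i).1, ?_⟩
  calc hammingDist m m' = (univ.filter fun i => m i ≠ m' i).card := rfl
    _ ≤ _ := Finset.card_le_card ?_
  intro i hi
  rw [Finset.mem_filter] at hi ⊢
  rcases (hpt i).2 with h' | h'
  · exact ⟨hi.1, h'⟩
  · exact absurd h' hi.2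

private lemma glue_eq_inl {p q a : ℕ} {m m' : Fin 5 → Fin p} {z : Fin 5 → Fin q ⊕ Fin a}
    {d : Fin 5 → Fin q} (h : glue p q a (m, z) = fun i => Sum.inl (m' i, d i)) : m = m' := by
  funext i
  by_contra hne
  exact glue_ne_inl hne (congrFun h i)

private lemma glue_eq_inr {p q a : ℕ} {m : Fin 5 → Fin p} {z : Fin 5 → Fin q ⊕ Fin a}
    {e : Fin 5 → Fin a} (h : glue p q a (m, z) = fun i => Sum.inr (e i)) :
    ∀ i, (z i).isRight := by
  intro i
  rcases hz : z i with y | b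
  · have := congrFun h i
    simp [glue, hz] at this
  · simp [hz]
/-- Theorem 1, the Wilson-type construction: given a super MDS(2,5,p)
chain `M₂ ⊂ M₁ ⊂ M`, an MDS(2,5,q) code `D`, an MDS(2,5,q₁-q) code `E` on the alphabet
`A` (`|A| = a = q₁ - q`), an MDS(2,5,q₁) code `F` with 4-A-hole and an MDS(2,5,q₁) code
`G` with 5-A-hole, the set
`C = E ∪ (M₂ ×_A G) ∪ ((M₁ \ M₂) ×_A F) ∪ ((M \ M₁) × D)`
is an MDS(2,5,(p-1)q + q₁) code. -/
theorem stmt_11 (p q q₁ a : ℕ) (hp : 1 ≤ p) (ha : q + a = q₁)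
    (M M₁ M₂ : Finset (Fin 5 → Fin p)) (h21 : M₂ ⊆ M₁) (h1 : M₁ ⊆ M)
    (hM : ∀ x ∈ M, ∀ y ∈ M, x ≠ y → 3 ≤ hammingDist x y) (hMc : M.card = p ^ 3)
    (hM1 : ∀ x ∈ M₁, ∀ y ∈ M₁, x ≠ y → 4 ≤ hammingDist x y) (hM1c : M₁.card = p ^ 2)
    (hM2 : ∀ x ∈ M₂, ∀ y ∈ M₂, x ≠ y → 5 ≤ hammingDist x y) (hM2c : M₂.card = p)
    (D : Finset (Fin 5 → Fin q))
    (hD : ∀ x ∈ D, ∀ y ∈ D, x ≠ y → 3 ≤ hammingDist x y) (hDc : D.card = q ^ 3)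
    (E : Finset (Fin 5 → Fin a))
    (hE : ∀ x ∈ E, ∀ y ∈ E, x ≠ y → 3 ≤ hammingDist x y) (hEc : E.card = a ^ 3)
    (F : Finset (Fin 5 → Fin q ⊕ Fin a))
    (hF : ∀ x ∈ F, ∀ y ∈ F, x ≠ y → 3 ≤ hammingDist x y)
    (hFhole1 : ↑F ∩ hammingNbhd 3 {z : Fin 5 → Fin q ⊕ Fin a | ∀ i, (z i).isRight} = ∅)
    (hFhole2 : hammingNbhd 3 (↑F : Set (Fin 5 → Fin q ⊕ Fin a)) =
      {z : Fin 5 → Fin q ⊕ Fin a | ∀ i, (z i).isRight}ᶜ)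
    (hFc : F.card = q ^ 3 + 3 * q ^ 2 * a)
    (G : Finset (Fin 5 → Fin q ⊕ Fin a))
    (hG : ∀ x ∈ G, ∀ y ∈ G, x ≠ y → 3 ≤ hammingDist x y)
    (hGhole1 : ↑G ∩ hammingNbhd 2 {z : Fin 5 → Fin q ⊕ Fin a | ∀ i, (z i).isRight} = ∅)
    (hGhole2 : hammingNbhd 2 (↑G : Set (Fin 5 → Fin q ⊕ Fin a)) =
      {z : Fin 5 → Fin q ⊕ Fin a | ∀ i, (z i).isRight}ᶜ)
    (hGc : G.card = q₁ ^ 3 - a ^ 3) :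
    (∀ x ∈ (E.image fun e (i : Fin 5) => (Sum.inr (e i) : (Fin p × Fin q) ⊕ Fin a)) ∪
        (M₂ ×ˢ G).image (glue p q a) ∪ ((M₁ \ M₂) ×ˢ F).image (glue p q a) ∪
        ((M \ M₁) ×ˢ D).image (fun z (i : Fin 5) =>
          (Sum.inl (z.1 i, z.2 i) : (Fin p × Fin q) ⊕ Fin a)),
      ∀ y ∈ (E.image fun e (i : Fin 5) => (Sum.inr (e i) : (Fin p × Fin q) ⊕ Fin a)) ∪
        (M₂ ×ˢ G).image (glue p q a) ∪ ((M₁ \ M₂) ×ˢ F).image (glue p q a) ∪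
        ((M \ M₁) ×ˢ D).image (fun z (i : Fin 5) =>
          (Sum.inl (z.1 i, z.2 i) : (Fin p × Fin q) ⊕ Fin a)),
        x ≠ y → 3 ≤ hammingDist x y) ∧
    ((E.image fun e (i : Fin 5) => (Sum.inr (e i) : (Fin p × Fin q) ⊕ Fin a)) ∪
        (M₂ ×ˢ G).image (glue p q a) ∪ ((M₁ \ M₂) ×ˢ F).image (glue p q a) ∪
        ((M \ M₁) ×ˢ D).image (fun z (i : Fin 5) =>
          (Sum.inl (z.1 i, z.2 i) : (Fin p × Fin q) ⊕ Fin a))).card =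
      ((p - 1) * q + q₁) ^ 3 := by
  classical
  have hFh : ∀ f ∈ F, ∀ z : Fin 5 → Fin q ⊕ Fin a, (∀ i, (z i).isRight) →
      4 ≤ hammingDist f z := by
    intro f hf z hz
    by_contra hlt
    push_neg at hlt
    have hmem : f ∈ (↑F ∩ hammingNbhd 3 {z : Fin 5 → Fin q ⊕ Fin a | ∀ i, (z i).isRight}) :=
      ⟨hf, ⟨z, hz, by omega⟩⟩
    rw [hFhole1] at hmem
    exact hmem
  have hGh : ∀ g ∈ G, ∀ z : Fin 5 → Fin q ⊕ Fin a, (∀ i, (z i).isRight) →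
      3 ≤ hammingDist g z := by
    intro g hg z hz
    by_contra hlt
    push_neg at hlt
    have hmem : g ∈ (↑G ∩ hammingNbhd 2 {z : Fin 5 → Fin q ⊕ Fin a | ∀ i, (z i).isRight}) :=
      ⟨hg, ⟨z, hz, by omega⟩⟩
    rw [hGhole1] at hmem
    exact hmem
  have hFr : ∀ f ∈ F, (univ.filter fun i => (f i).isRight).card ≤ 1 := by
    intro f hf
    have := rightset_bound (k := 3) f (by norm_num) (fun z hz => hFh f hf z hz)
    omega
  have hGr : ∀ g ∈ G, (univ.filter fun i => (g i).isRight).card ≤ 2 := by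
    intro g hg
    have := rightset_bound (k := 2) g (by norm_num) (fun z hz => hGh g hg z hz)
    omega
  refine ⟨?_, ?_⟩
  · -- distance part
    have KEE : ∀ e ∈ E, ∀ e' ∈ E,
        (fun i => (Sum.inr (e i) : (Fin p × Fin q) ⊕ Fin a)) ≠ (fun i => Sum.inr (e' i)) →
        3 ≤ hammingDist (fun i => (Sum.inr (e i) : (Fin p × Fin q) ⊕ Fin a))
          (fun i => Sum.inr (e' i)) := by
      intro e he e' he' hne
      have hee : e ≠ e' := fun h => hne (by rw [h])
      refine le_trans (hE e he e' he' hee) ?_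
      calc hammingDist e e' = (univ.filter fun i => e i ≠ e' i).card := rfl
        _ ≤ _ := card_le_hd _ (fun i hi => by
            have := (Finset.mem_filter.1 hi).2; simp [this])
    have KEG : ∀ (e : Fin 5 → Fin a), ∀ g ∈ G, ∀ m : Fin 5 → Fin p,
        3 ≤ hammingDist (glue p q a (m, g))
          (fun i => (Sum.inr (e i) : (Fin p × Fin q) ⊕ Fin a)) := by
      intro e g hg m
      exact le_trans (hGh g hg (fun i => Sum.inr (e i)) (fun i => rfl)) (glue_dist_inr m g e)
    have KEF : ∀ (e : Fin 5 → Fin a), ∀ f ∈ F, ∀ m : Fin 5 → Fin p,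
        3 ≤ hammingDist (glue p q a (m, f))
          (fun i => (Sum.inr (e i) : (Fin p × Fin q) ⊕ Fin a)) := by
      intro e f hf m
      have := le_trans (hFh f hf (fun i => Sum.inr (e i)) (fun i => rfl)) (glue_dist_inr m f e)
      omega
    have KED : ∀ (e : Fin 5 → Fin a) (m : Fin 5 → Fin p) (d : Fin 5 → Fin q),
        3 ≤ hammingDist (fun i => (Sum.inr (e i) : (Fin p × Fin q) ⊕ Fin a))
          (fun i => Sum.inl (m i, d i)) := by
      intro e m d
      have h5 : (univ : Finset (Fin 5)).card ≤ hammingDist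
          (fun i => (Sum.inr (e i) : (Fin p × Fin q) ⊕ Fin a))
          (fun i => Sum.inl (m i, d i)) :=
        card_le_hd _ (fun i _ => by simp)
      simp only [Finset.card_univ, Fintype.card_fin] at h5
      omega
    have KGG : ∀ m ∈ M₂, ∀ g ∈ G, ∀ m' ∈ M₂, ∀ g' ∈ G,
        glue p q a (m, g) ≠ glue p q a (m', g') →
        3 ≤ hammingDist (glue p q a (m, g)) (glue p q a (m', g')) := by
      intro m hm g hg m' hm' g' hg' hne
      by_cases hmm : m = m'
      · subst hmm
        have hgg : g ≠ g' := fun h => hne (by rw [h])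
        exact le_trans (hG g hg g' hg' hgg) (glue_dist_z m m g g')
      · have h5 := hM2 m hm m' hm' hmm
        have hgl := glue_dist_m (p := p) (q := q) (a := a) m m' g g'
        have := hGr g hg
        omega
    have KFF : ∀ m ∈ M₁ \ M₂, ∀ f ∈ F, ∀ m' ∈ M₁ \ M₂, ∀ f' ∈ F,
        glue p q a (m, f) ≠ glue p q a (m', f') →
        3 ≤ hammingDist (glue p q a (m, f)) (glue p q a (m', f')) := by
      intro m hm f hf m' hm' f' hf' hne
      by_cases hmm : m = m'
      · subst hmm
        have hff : f ≠ f' := fun h => hne (by rw [h])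
        exact le_trans (hF f hf f' hf' hff) (glue_dist_z m m f f')
      · have h4 := hM1 m (Finset.mem_sdiff.1 hm).1 m' (Finset.mem_sdiff.1 hm').1 hmm
        have hgl := glue_dist_m (p := p) (q := q) (a := a) m m' f f'
        have := hFr f hf
        omega
    have KGF : ∀ m ∈ M₂, ∀ (g : Fin 5 → Fin q ⊕ Fin a), ∀ m' ∈ M₁ \ M₂, ∀ f ∈ F,
        3 ≤ hammingDist (glue p q a (m, g)) (glue p q a (m', f)) := by
      intro m hm g m' hm' f hf
      rw [hammingDist_comm]
      have hne : m' ≠ m := by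
        intro h; subst h; exact (Finset.mem_sdiff.1 hm').2 hm
      have h4 := hM1 m' (Finset.mem_sdiff.1 hm').1 m (h21 hm) hne
      have hgl := glue_dist_m (p := p) (q := q) (a := a) m' m f g
      have := hFr f hf
      omega
    have KD : ∀ m ∈ M₁, ∀ (z : Fin 5 → Fin q ⊕ Fin a), ∀ m' ∈ M \ M₁,
        ∀ (d : Fin 5 → Fin q),
        3 ≤ hammingDist (glue p q a (m, z)) (fun i => Sum.inl (m' i, d i)) := by
      intro m hm z m' hm' d
      have hne : m ≠ m' := by
        intro h; subst h; exact (Finset.mem_sdiff.1 hm').2 hm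
      exact le_trans (hM m (h1 hm) m' (Finset.mem_sdiff.1 hm').1 hne)
        (glue_dist_inl m m' z d)
    have KDD : ∀ m ∈ M \ M₁, ∀ d ∈ D, ∀ m' ∈ M \ M₁, ∀ d' ∈ D,
        (fun i => (Sum.inl (m i, d i) : (Fin p × Fin q) ⊕ Fin a)) ≠
          (fun i => Sum.inl (m' i, d' i)) →
        3 ≤ hammingDist (fun i => (Sum.inl (m i, d i) : (Fin p × Fin q) ⊕ Fin a))
          (fun i => Sum.inl (m' i, d' i)) := by
      intro m hm d hd m' hm' d' hd' hne
      by_cases hmm : m = m'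
      · subst hmm
        have hdd : d ≠ d' := fun h => hne (by rw [h])
        refine le_trans (hD d hd d' hd' hdd) ?_
        calc hammingDist d d' = (univ.filter fun i => d i ≠ d' i).card := rfl
          _ ≤ _ := card_le_hd _ (fun i hi => by
              have := (Finset.mem_filter.1 hi).2; simp [this])
      · refine le_trans (hM m (Finset.mem_sdiff.1 hm).1 m' (Finset.mem_sdiff.1 hm').1 hmm) ?_
        calc hammingDist m m' = (univ.filter fun i => m i ≠ m' i).card := rfl
          _ ≤ _ := card_le_hd _ (fun i hi => by
              have := (Finset.mem_filter.1 hi).2; simp [this])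
    intro x hx y hy hxy
    simp only [Finset.mem_union, Finset.mem_image, Finset.mem_product, Prod.exists] at hx hy
    rcases hx with (((⟨e, he, rfl⟩ | ⟨m, g, ⟨hm, hg⟩, rfl⟩) | ⟨m, f, ⟨hm, hf'⟩, rfl⟩) |
      ⟨m, d, ⟨hm, hd'⟩, rfl⟩) <;>
    rcases hy with (((⟨e', he', rfl⟩ | ⟨m', g', ⟨hm', hg'⟩, rfl⟩) | ⟨m', f', ⟨hm', hf''⟩, rfl⟩) |
      ⟨m', d', ⟨hm', hd''⟩, rfl⟩)
    · exact KEE e he e' he' hxy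
    · rw [hammingDist_comm]; exact KEG e g' hg' m'
    · rw [hammingDist_comm]; exact KEF e f' hf'' m'
    · exact KED e m' d'
    · exact KEG e' g hg m
    · exact KGG m hm g hg m' hm' g' hg' hxy
    · exact KGF m hm g m' hm' f' hf''
    · exact KD m (h21 hm) g m' hm' d'
    · exact KEF e' f hf' m
    · rw [hammingDist_comm]; exact KGF m' hm' g' m hm f hf'
    · exact KFF m hm f hf' m' hm' f' hf'' hxy
    · exact KD m (Finset.mem_sdiff.1 hm).1 f m' hm' d'
    · rw [hammingDist_comm]; exact KED e' m d
    · rw [hammingDist_comm]; exact KD m' (h21 hm') g' m hm d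
    · rw [hammingDist_comm]; exact KD m' (Finset.mem_sdiff.1 hm').1 f' m hm d
    · exact KDD m hm d hd' m' hm' d' hd'' hxy
  · -- cardinality part
    subst ha
    have hEinj : Set.InjOn (fun (e : Fin 5 → Fin a) (i : Fin 5) =>
        (Sum.inr (e i) : (Fin p × Fin q) ⊕ Fin a)) ↑E := by
      intro e _ e' _ h
      funext i
      have := congrFun h i
      simpa using this
    have hDinj : Set.InjOn (fun (z : (Fin 5 → Fin p) × (Fin 5 → Fin q)) (i : Fin 5) =>
        (Sum.inl (z.1 i, z.2 i) : (Fin p × Fin q) ⊕ Fin a)) ↑((M \ M₁) ×ˢ D) := by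
      rintro ⟨m, d⟩ _ ⟨m', d'⟩ _ h
      have h' : ∀ i, m i = m' i ∧ d i = d' i := by
        intro i
        have := congrFun h i
        simpa using this
      simp only [Prod.mk.injEq]
      exact ⟨funext fun i => (h' i).1, funext fun i => (h' i).2⟩
    have hGinj : Set.InjOn (glue p q a) ↑(M₂ ×ˢ G) := by
      rintro ⟨m, g⟩ hmg ⟨m', g'⟩ hmg' hgl
      rw [Finset.mem_coe, Finset.mem_product] at hmg hmg'
      obtain ⟨hz, hdm⟩ := glue_inj_aux hgl
      have hmeq : m = m' := by
        by_contra hne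
        have := hM2 m hmg.1 m' hmg'.1 hne
        have := hGr g hmg.2
        omega
      simp only [Prod.mk.injEq]
      exact ⟨hmeq, hz⟩
    have hFinj : Set.InjOn (glue p q a) ↑((M₁ \ M₂) ×ˢ F) := by
      rintro ⟨m, f⟩ hmf ⟨m', f'⟩ hmf' hgl
      rw [Finset.mem_coe, Finset.mem_product] at hmf hmf'
      obtain ⟨hz, hdm⟩ := glue_inj_aux hgl
      have hmeq : m = m' := by
        by_contra hne
        have := hM1 m (Finset.mem_sdiff.1 hmf.1).1 m' (Finset.mem_sdiff.1 hmf'.1).1 hne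
        have := hFr f hmf.2
        omega
      simp only [Prod.mk.injEq]
      exact ⟨hmeq, hz⟩
    have d1 : Disjoint (E.image fun e (i : Fin 5) =>
        (Sum.inr (e i) : (Fin p × Fin q) ⊕ Fin a)) ((M₂ ×ˢ G).image (glue p q a)) := by
      rw [Finset.disjoint_left]
      rintro x hx hx'
      simp only [Finset.mem_image, Finset.mem_product, Prod.exists] at hx hx'
      obtain ⟨e, he, rfl⟩ := hx
      obtain ⟨m, g, ⟨hm, hg⟩, hgl⟩ := hx'
      have hall := glue_eq_inr hgl
      have h5 : (univ.filter fun i => (g i).isRight).card = 5 := by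
        rw [Finset.filter_true_of_mem (fun i _ => hall i)]
        simp
      have := hGr g hg
      omega
    have d2 : Disjoint (E.image fun e (i : Fin 5) =>
        (Sum.inr (e i) : (Fin p × Fin q) ⊕ Fin a)) (((M₁ \ M₂) ×ˢ F).image (glue p q a)) := by
      rw [Finset.disjoint_left]
      rintro x hx hx'
      simp only [Finset.mem_image, Finset.mem_product, Prod.exists] at hx hx'
      obtain ⟨e, he, rfl⟩ := hx
      obtain ⟨m, f, ⟨hm, hf'⟩, hgl⟩ := hx'
      have hall := glue_eq_inr hgl
      have h5 : (univ.filter fun i => (f i).isRight).card = 5 := by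
        rw [Finset.filter_true_of_mem (fun i _ => hall i)]
        simp
      have := hFr f hf'
      omega
    have d3 : Disjoint (E.image fun e (i : Fin 5) =>
        (Sum.inr (e i) : (Fin p × Fin q) ⊕ Fin a))
        (((M \ M₁) ×ˢ D).image (fun z (i : Fin 5) =>
          (Sum.inl (z.1 i, z.2 i) : (Fin p × Fin q) ⊕ Fin a))) := by
      rw [Finset.disjoint_left]
      rintro x hx hx'
      simp only [Finset.mem_image, Finset.mem_product, Prod.exists] at hx hx'
      obtain ⟨e, he, rfl⟩ := hx
      obtain ⟨m, d, _, hgl⟩ := hx'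
      have := congrFun hgl 0
      simp at this
    have d4 : Disjoint ((M₂ ×ˢ G).image (glue p q a))
        (((M₁ \ M₂) ×ˢ F).image (glue p q a)) := by
      rw [Finset.disjoint_left]
      rintro x hx hx'
      simp only [Finset.mem_image, Finset.mem_product, Prod.exists] at hx hx'
      obtain ⟨m, g, ⟨hm, hg⟩, rfl⟩ := hx
      obtain ⟨m', f, ⟨hm', hf'⟩, hgl⟩ := hx'
      obtain ⟨hz, hdm⟩ := glue_inj_aux hgl
      have hne : m' ≠ m := by
        intro h; subst h; exact (Finset.mem_sdiff.1 hm').2 hm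
      have h4 := hM1 m' (Finset.mem_sdiff.1 hm').1 m (h21 hm) hne
      have := hFr f hf'
      omega
    have d5 : Disjoint ((M₂ ×ˢ G).image (glue p q a))
        (((M \ M₁) ×ˢ D).image (fun z (i : Fin 5) =>
          (Sum.inl (z.1 i, z.2 i) : (Fin p × Fin q) ⊕ Fin a))) := by
      rw [Finset.disjoint_left]
      rintro x hx hx'
      simp only [Finset.mem_image, Finset.mem_product, Prod.exists] at hx hx'
      obtain ⟨m, g, ⟨hm, hg⟩, rfl⟩ := hx
      obtain ⟨m', d, ⟨hm', hd'⟩, hgl⟩ := hx'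
      have hmeq : m = m' := glue_eq_inl hgl.symm
      exact (Finset.mem_sdiff.1 hm').2 (hmeq ▸ h21 hm)
    have d6 : Disjoint (((M₁ \ M₂) ×ˢ F).image (glue p q a))
        (((M \ M₁) ×ˢ D).image (fun z (i : Fin 5) =>
          (Sum.inl (z.1 i, z.2 i) : (Fin p × Fin q) ⊕ Fin a))) := by
      rw [Finset.disjoint_left]
      rintro x hx hx'
      simp only [Finset.mem_image, Finset.mem_product, Prod.exists] at hx hx'
      obtain ⟨m, f, ⟨hm, hf'⟩, rfl⟩ := hx
      obtain ⟨m', d, ⟨hm', hd'⟩, hgl⟩ := hx'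
      have hmeq : m = m' := glue_eq_inl hgl.symm
      exact (Finset.mem_sdiff.1 hm').2 (hmeq ▸ (Finset.mem_sdiff.1 hm).1)
    rw [Finset.card_union_of_disjoint (by
        rw [Finset.disjoint_union_left, Finset.disjoint_union_left]
        exact ⟨⟨d3, d5⟩, d6⟩),
      Finset.card_union_of_disjoint (by
        rw [Finset.disjoint_union_left]
        exact ⟨d2, d4⟩),
      Finset.card_union_of_disjoint d1,
      Finset.card_image_of_injOn hEinj, Finset.card_image_of_injOn hGinj,
      Finset.card_image_of_injOn hFinj, Finset.card_image_of_injOn hDinj,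
      Finset.card_product, Finset.card_product, Finset.card_product,
      Finset.card_sdiff_of_subset h21, Finset.card_sdiff_of_subset h1,
      hEc, hGc, hFc, hDc, hM2c, hM1c, hMc]
    have e1 : a ^ 3 ≤ (q + a) ^ 3 := Nat.pow_le_pow_left (Nat.le_add_left a q) 3
    have e2 : p ≤ p ^ 2 := Nat.le_self_pow (by norm_num) p
    have e3 : p ^ 2 ≤ p ^ 3 := Nat.pow_le_pow_right hp (by norm_num)
    zify [e1, e2, e3, hp]
    ring
end

section
/- In the setting of the Wilson-type construction (Theorem 1), the Hamming distance between the codes (M \ M_1) × D and E equals 5, and the distance between (M_1 \ M_2) ×_A F and M_2 ×_A G is at least 3. -/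
/-- in the setting of the Wilson-type construction (Theorem 1), the
Hamming distance between the codes `(M \ M₁) × D` and `E` equals 5 (every pair of
points, one from each, is at distance exactly 5), and the distance between
`(M₁ \ M₂) ×_A F` and `M₂ ×_A G` is at least 3. -/
theorem stmt_14 (p q q₁ a : ℕ) (hp : 1 ≤ p) (ha : q + a = q₁)
    (M M₁ M₂ : Finset (Fin 5 → Fin p)) (h21 : M₂ ⊆ M₁) (h1 : M₁ ⊆ M)
    (hM : ∀ x ∈ M, ∀ y ∈ M, x ≠ y → 3 ≤ hammingDist x y) (hMc : M.card = p ^ 3)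
    (hM1 : ∀ x ∈ M₁, ∀ y ∈ M₁, x ≠ y → 4 ≤ hammingDist x y) (hM1c : M₁.card = p ^ 2)
    (hM2 : ∀ x ∈ M₂, ∀ y ∈ M₂, x ≠ y → 5 ≤ hammingDist x y) (hM2c : M₂.card = p)
    (D : Finset (Fin 5 → Fin q))
    (hD : ∀ x ∈ D, ∀ y ∈ D, x ≠ y → 3 ≤ hammingDist x y) (hDc : D.card = q ^ 3)
    (E : Finset (Fin 5 → Fin a))
    (hE : ∀ x ∈ E, ∀ y ∈ E, x ≠ y → 3 ≤ hammingDist x y) (hEc : E.card = a ^ 3)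
    (F : Finset (Fin 5 → Fin q ⊕ Fin a))
    (hF : ∀ x ∈ F, ∀ y ∈ F, x ≠ y → 3 ≤ hammingDist x y)
    (hFhole1 : ↑F ∩ hammingNbhd 3 {z : Fin 5 → Fin q ⊕ Fin a | ∀ i, (z i).isRight} = ∅)
    (hFhole2 : hammingNbhd 3 (↑F : Set (Fin 5 → Fin q ⊕ Fin a)) =
      {z : Fin 5 → Fin q ⊕ Fin a | ∀ i, (z i).isRight}ᶜ)
    (hFc : F.card = q ^ 3 + 3 * q ^ 2 * a)
    (G : Finset (Fin 5 → Fin q ⊕ Fin a))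
    (hG : ∀ x ∈ G, ∀ y ∈ G, x ≠ y → 3 ≤ hammingDist x y)
    (hGhole1 : ↑G ∩ hammingNbhd 2 {z : Fin 5 → Fin q ⊕ Fin a | ∀ i, (z i).isRight} = ∅)
    (hGhole2 : hammingNbhd 2 (↑G : Set (Fin 5 → Fin q ⊕ Fin a)) =
      {z : Fin 5 → Fin q ⊕ Fin a | ∀ i, (z i).isRight}ᶜ)
    (hGc : G.card = q₁ ^ 3 - a ^ 3) :
    (∀ z ∈ (M \ M₁) ×ˢ D, ∀ e ∈ E,
      hammingDist
        (fun i : Fin 5 => (Sum.inl (z.1 i, z.2 i) : (Fin p × Fin q) ⊕ Fin a))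
        (fun i : Fin 5 => (Sum.inr (e i) : (Fin p × Fin q) ⊕ Fin a)) = 5) ∧
    (∀ z ∈ (M₁ \ M₂) ×ˢ F, ∀ w ∈ M₂ ×ˢ G,
      3 ≤ hammingDist (glue p q a z) (glue p q a w)) := by
  constructor
  · intro z _ e _
    have : ∀ i : Fin 5,
        (Sum.inl (z.1 i, z.2 i) : (Fin p × Fin q) ⊕ Fin a) ≠ Sum.inr (e i) := by
      intro i h; exact Sum.inl_ne_inr h
    simp [hammingDist, Finset.filter_true_of_mem (fun i _ => this i)]
  · intro z hz w hw
    simp only [Finset.mem_product, Finset.mem_sdiff] at hz hw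
    -- z.2 ∈ F has at most one Right coordinate
    have hone : (Finset.univ.filter fun i => (z.2 i).isRight).card ≤ 1 := by
      by_contra hcon
      push_neg at hcon
      obtain ⟨i, hi, j, hj, hij⟩ := Finset.one_lt_card.mp hcon
      simp only [Finset.mem_filter] at hi hj
      obtain ⟨b, hb⟩ := Sum.isRight_iff.mp hi.2
      set y : Fin 5 → Fin q ⊕ Fin a :=
        fun k => if (z.2 k).isRight then z.2 k else Sum.inr b with hy
      have hyr : ∀ k, (y k).isRight := by
        intro k
        by_cases h : (z.2 k).isRight <;> simp [hy, h]
      have hsub : (Finset.univ.filter fun k => z.2 k ≠ y k) ⊆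
          Finset.univ \ (Finset.univ.filter fun k => (z.2 k).isRight) := by
        intro k hk
        simp only [Finset.mem_filter, Finset.mem_sdiff, Finset.mem_univ,
          true_and] at hk ⊢
        intro h
        exact hk (by simp [hy, h])
      have hdist : hammingDist z.2 y ≤ 3 := by
        have h2 : 2 ≤ (Finset.univ.filter fun k => (z.2 k).isRight).card := by
          have : ({i, j} : Finset (Fin 5)) ⊆
              Finset.univ.filter fun k => (z.2 k).isRight := by
            intro k hk
            simp only [Finset.mem_insert, Finset.mem_singleton] at hk
            rcases hk with rfl | rfl
            · exact Finset.mem_filter.mpr ⟨Finset.mem_univ _, hi.2⟩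
            · exact Finset.mem_filter.mpr ⟨Finset.mem_univ _, hj.2⟩
          calc 2 = ({i, j} : Finset (Fin 5)).card := by
                rw [Finset.card_insert_of_notMem (by simpa using hij),
                  Finset.card_singleton]
            _ ≤ _ := Finset.card_le_card this
        calc hammingDist z.2 y
            ≤ (Finset.univ \
                (Finset.univ.filter fun k => (z.2 k).isRight)).card :=
              Finset.card_le_card hsub
          _ = 5 - (Finset.univ.filter fun k => (z.2 k).isRight).card := by
              rw [Finset.card_sdiff_of_subset (Finset.filter_subset _ _)]
              simp
          _ ≤ 3 := by omega
      have : z.2 ∈ (↑F : Set (Fin 5 → Fin q ⊕ Fin a)) ∩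
          hammingNbhd 3 {v : Fin 5 → Fin q ⊕ Fin a | ∀ i, (v i).isRight} :=
        ⟨hz.2, y, hyr, hdist⟩
      rw [hFhole1] at this
      exact this
    -- z.1 and w.1 differ in at least 4 coordinates
    have hzw1 : z.1 ≠ w.1 := fun h => hz.1.2 (h ▸ hw.1)
    have h4 : 4 ≤ (Finset.univ.filter fun i => z.1 i ≠ w.1 i).card :=
      hM1 z.1 hz.1.1 w.1 (h21 hw.1) hzw1
    -- where they differ and z.2 is Left, glue differs
    have hsub : (Finset.univ.filter fun i => z.1 i ≠ w.1 i) \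
        (Finset.univ.filter fun i => (z.2 i).isRight) ⊆
        Finset.univ.filter fun i => glue p q a z i ≠ glue p q a w i := by
      intro i hi
      simp only [Finset.mem_sdiff, Finset.mem_filter, Finset.mem_univ,
        true_and] at hi ⊢
      obtain ⟨hne, hnr⟩ := hi
      intro heq
      rcases hy : z.2 i with y | b
      · rcases hw2 : w.2 i with y' | b'
        · have : (Sum.inl (z.1 i, y) : (Fin p × Fin q) ⊕ Fin a) =
              Sum.inl (w.1 i, y') := by
            simpa [glue, hy, hw2] using heq
          exact hne (congrArg Prod.fst (Sum.inl.inj this))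
        · simp [glue, hy, hw2] at heq
      · exact hnr (by simp [hy])
    calc 3 ≤ (Finset.univ.filter fun i => z.1 i ≠ w.1 i).card -
          (Finset.univ.filter fun i => (z.2 i).isRight).card := by omega
      _ ≤ ((Finset.univ.filter fun i => z.1 i ≠ w.1 i) \
          (Finset.univ.filter fun i => (z.2 i).isRight)).card :=
          Finset.le_card_sdiff _ _
      _ ≤ hammingDist (glue p q a z) (glue p q a w) :=
          Finset.card_le_card hsub
end

section
/- If D_2 ⊆ D_3 where D_2 is a Steiner system S(2,5,q) and D_3 is a Steiner system S(3,5,q) on the same point set Q_q, then there exists an MDS(2,5,q) code, i.e., a pair of orthogonal Latin cubes of order q. -/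
/-! Auxiliary machinery for statement 16. -/

/-- An MDS(2,5,5) codeword over `ZMod 5` determined by its first three entries. -/
def stmt16cw (a b c : ZMod 5) : Fin 5 → ZMod 5 := ![a, b, c, a + 2*b + 3*c, 3*a + 2*b + c]

/-- The set of coordinates where two quintuples agree. -/
def stmt16agr {α : Type*} [DecidableEq α] (x y : Fin 5 → α) : Finset (Fin 5) :=
  Finset.univ.filter (fun i => x i = y i)

lemma stmt16cw_zero : ∀ a b c : ZMod 5,
    3 ≤ (Finset.univ.filter (fun i => stmt16cw a b c i = 0)).card →
    a = 0 ∧ b = 0 ∧ c = 0 := by decide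

lemma stmt16cw_sub (a b c a' b' c' : ZMod 5) (i : Fin 5) :
    stmt16cw a b c i - stmt16cw a' b' c' i = stmt16cw (a - a') (b - b') (c - c') i := by
  fin_cases i <;> simp [stmt16cw] <;> ring

lemma stmt16cw_dist (a b c a' b' c' : ZMod 5)
    (h : 3 ≤ (stmt16agr (stmt16cw a b c) (stmt16cw a' b' c')).card) :
    a = a' ∧ b = b' ∧ c = c' := by
  have h' : 3 ≤ (Finset.univ.filter
      (fun i => stmt16cw (a-a') (b-b') (c-c') i = 0)).card := by
    refine le_trans h (Finset.card_le_card ?_)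
    intro i hi
    simp only [stmt16agr, Finset.mem_filter] at hi ⊢
    exact ⟨hi.1, by rw [← stmt16cw_sub, hi.2, sub_self]⟩
  obtain ⟨h1, h2, h3⟩ := stmt16cw_zero _ _ _ h'
  exact ⟨by linear_combination h1, by linear_combination h2, by linear_combination h3⟩

lemma stmt16cw_const : ∀ a : ZMod 5, stmt16cw a a a = fun _ => a := by decide

lemma stmt16cw_apply0 (a b c : ZMod 5) : stmt16cw a b c 0 = a := rfl
lemma stmt16cw_apply1 (a b c : ZMod 5) : stmt16cw a b c 1 = b := rfl
lemma stmt16cw_apply2 (a b c : ZMod 5) : stmt16cw a b c 2 = c := rfl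

set_option maxHeartbeats 8000000 in
set_option maxRecDepth 100000 in
lemma stmt16perm_dist : ∀ σ τ : Equiv.Perm (Fin 5), σ.sign = 1 → τ.sign = 1 →
    3 ≤ (stmt16agr σ τ).card → σ = τ := by decide

set_option maxHeartbeats 8000000 in
set_option maxRecDepth 100000 in
lemma stmt16perm_exists : ∀ i j k : Fin 5, i ≠ j → i ≠ k → j ≠ k →
    ∃ σ : Equiv.Perm (Fin 5), σ.sign = 1 ∧ σ 0 = i ∧ σ 1 = j ∧ σ 2 = k := by decide

lemma stmt16agr_comp {α β : Type*} [DecidableEq α] [DecidableEq β]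
    {e : α → β} (he : Function.Injective e) (u v : Fin 5 → α) :
    stmt16agr (e ∘ u) (e ∘ v) = stmt16agr u v := by
  ext i
  simp [stmt16agr, he.eq_iff]

section emb

variable {Q : Type} [DecidableEq Q]
set_option linter.unusedSectionVars false

/-- An enumeration of a 5-element finset. -/
noncomputable def stmt16emb (X : Finset Q) (hX : X.card = 5) : Fin 5 → Q :=
  fun i => (X.equivFin.symm (Fin.cast hX.symm i) : Q)

lemma stmt16emb_mem (X : Finset Q) (hX : X.card = 5) (i : Fin 5) :
    stmt16emb X hX i ∈ X := (X.equivFin.symm (Fin.cast hX.symm i)).2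

lemma stmt16emb_inj (X : Finset Q) (hX : X.card = 5) :
    Function.Injective (stmt16emb X hX) := by
  intro i j h
  have := X.equivFin.symm.injective (Subtype.ext h)
  simpa [Fin.ext_iff] using congrArg Fin.val this

lemma stmt16emb_surj (X : Finset Q) (hX : X.card = 5) {a : Q} (ha : a ∈ X) :
    ∃ i, stmt16emb X hX i = a := by
  refine ⟨Fin.cast hX (X.equivFin ⟨a, ha⟩), ?_⟩
  have : Fin.cast hX.symm (Fin.cast hX (X.equivFin ⟨a, ha⟩)) = X.equivFin ⟨a, ha⟩ := by
    ext; simp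
  simp only [stmt16emb, this, Equiv.symm_apply_apply]

/-- The code piece attached to a block of `D₂`. -/
noncomputable def stmt16M2 (X : Finset Q) (hX : X.card = 5) : Finset (Fin 5 → Q) :=
  (Finset.univ : Finset (ZMod 5 × ZMod 5 × ZMod 5)).image
    (fun p => stmt16emb X hX ∘ stmt16cw p.1 p.2.1 p.2.2)

/-- The code piece attached to a block of `D₃ \ D₂`. -/
noncomputable def stmt16M3 (X : Finset Q) (hX : X.card = 5) : Finset (Fin 5 → Q) :=
  (Finset.univ.filter (fun σ : Equiv.Perm (Fin 5) => σ.sign = 1)).image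
    (fun σ : Equiv.Perm (Fin 5) => stmt16emb X hX ∘ ⇑σ)

lemma stmt16M2_vals {X : Finset Q} {hX : X.card = 5} {x : Fin 5 → Q}
    (hx : x ∈ stmt16M2 X hX) : ∀ i, x i ∈ X := by
  obtain ⟨p, -, rfl⟩ := Finset.mem_image.mp hx
  exact fun i => stmt16emb_mem X hX _

lemma stmt16M3_vals {X : Finset Q} {hX : X.card = 5} {x : Fin 5 → Q}
    (hx : x ∈ stmt16M3 X hX) : ∀ i, x i ∈ X := by
  obtain ⟨σ, -, rfl⟩ := Finset.mem_image.mp hx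
  exact fun i => stmt16emb_mem X hX _

lemma stmt16M3_inj {X : Finset Q} {hX : X.card = 5} {x : Fin 5 → Q}
    (hx : x ∈ stmt16M3 X hX) : Function.Injective x := by
  obtain ⟨σ, -, rfl⟩ := Finset.mem_image.mp hx
  exact (stmt16emb_inj X hX).comp σ.injective

lemma stmt16M2_dist {X : Finset Q} {hX : X.card = 5} {x y : Fin 5 → Q}
    (hx : x ∈ stmt16M2 X hX) (hy : y ∈ stmt16M2 X hX)
    (h : 3 ≤ (stmt16agr x y).card) : x = y := by
  obtain ⟨⟨a, b, c⟩, -, rfl⟩ := Finset.mem_image.mp hx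
  obtain ⟨⟨a', b', c'⟩, -, rfl⟩ := Finset.mem_image.mp hy
  have h' : 3 ≤ (stmt16agr (stmt16cw a b c) (stmt16cw a' b' c')).card :=
    h.trans_eq (congrArg Finset.card (stmt16agr_comp (stmt16emb_inj X hX) _ _))
  obtain ⟨rfl, rfl, rfl⟩ := stmt16cw_dist _ _ _ _ _ _ h'
  rfl

lemma stmt16M3_dist {X : Finset Q} {hX : X.card = 5} {x y : Fin 5 → Q}
    (hx : x ∈ stmt16M3 X hX) (hy : y ∈ stmt16M3 X hX)
    (h : 3 ≤ (stmt16agr x y).card) : x = y := by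
  obtain ⟨σ, hσ, rfl⟩ := Finset.mem_image.mp hx
  obtain ⟨τ, hτ, rfl⟩ := Finset.mem_image.mp hy
  rw [Finset.mem_filter] at hσ hτ
  rw [stmt16agr_comp (stmt16emb_inj X hX)] at h
  rw [stmt16perm_dist σ τ hσ.2 hτ.2 h]

lemma stmt16M2_const {X : Finset Q} {hX : X.card = 5} {a : Q} (ha : a ∈ X) :
    (fun _ => a : Fin 5 → Q) ∈ stmt16M2 X hX := by
  obtain ⟨a₀, rfl⟩ := stmt16emb_surj X hX ha
  refine Finset.mem_image.mpr ⟨(a₀, a₀, a₀), Finset.mem_univ _, ?_⟩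
  funext i
  simp [Function.comp, stmt16cw_const]
  exact congrArg (stmt16emb X hX) (congrFun (stmt16cw_const a₀) i)

end emb

/-- if `D₂ ⊆ D₃` where `D₂` is a Steiner system S(2,5,q) and `D₃` is a
Steiner system S(3,5,q) on the same `q`-element point set `Q`, then there exists an
MDS(2,5,q) code (a subset of `Q⁵` with minimum Hamming distance 3 and cardinality `q³`),
i.e. a pair of orthogonal latin cubes of order `q`. -/
theorem stmt_16 {Q : Type} [Fintype Q] [DecidableEq Q] (q : ℕ)
    (hq : Fintype.card Q = q)
    (D₂ D₃ : Finset (Finset Q)) (hsub : D₂ ⊆ D₃)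
    (h2blocks : ∀ X ∈ D₂, X.card = 5)
    (h2 : ∀ T : Finset Q, T.card = 2 → ∃! X, X ∈ D₂ ∧ T ⊆ X)
    (h3blocks : ∀ X ∈ D₃, X.card = 5)
    (h3 : ∀ T : Finset Q, T.card = 3 → ∃! X, X ∈ D₃ ∧ T ⊆ X) :
    ∃ C : Finset (Fin 5 → Q),
      (∀ x ∈ C, ∀ y ∈ C, x ≠ y → 3 ≤ hammingDist x y) ∧ C.card = q ^ 3 := by
  classical
  rcases le_or_gt (Fintype.card Q) 1 with hq1 | hq1
  · -- degenerate case `q ≤ 1`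
    have hs : Subsingleton Q := Fintype.card_le_one_iff_subsingleton.mp hq1
    refine ⟨Finset.univ, ?_, ?_⟩
    · intro x _ y _ hxy
      exact absurd (funext fun i => Subsingleton.elim _ _) hxy
    · rw [Finset.card_univ, Fintype.card_fun, Fintype.card_fin, hq]
      subst hq
      interval_cases h : Fintype.card Q <;> simp
  · -- main case `2 ≤ q`
    set C : Finset (Fin 5 → Q) := D₃.attach.biUnion
      (fun X => if X.1 ∈ D₂ then stmt16M2 X.1 (h3blocks X.1 X.2)
        else stmt16M3 X.1 (h3blocks X.1 X.2)) with hC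
    -- the key "distance" property
    have key : ∀ x ∈ C, ∀ y ∈ C, 3 ≤ (stmt16agr x y).card → x = y := by
      intro x hx y hy hA
      rw [hC, Finset.mem_biUnion] at hx hy
      obtain ⟨⟨X, hX3⟩, -, hxM⟩ := hx
      obtain ⟨⟨Y, hY3⟩, -, hyM⟩ := hy
      simp only at hxM hyM
      have hxval : ∀ i, x i ∈ X := by
        by_cases h : X ∈ D₂
        · rw [if_pos h] at hxM; exact stmt16M2_vals hxM
        · rw [if_neg h] at hxM; exact stmt16M3_vals hxM
      have hyval : ∀ i, y i ∈ Y := by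
        by_cases h : Y ∈ D₂
        · rw [if_pos h] at hyM; exact stmt16M2_vals hyM
        · rw [if_neg h] at hyM; exact stmt16M3_vals hyM
      set V : Finset Q := (stmt16agr x y).image x with hV
      have hVX : V ⊆ X := by
        intro a ha
        obtain ⟨i, -, rfl⟩ := Finset.mem_image.mp ha
        exact hxval i
      have hVY : V ⊆ Y := by
        intro a ha
        obtain ⟨i, hi, rfl⟩ := Finset.mem_image.mp ha
        rw [(Finset.mem_filter.mp hi).2]
        exact hyval i
      by_cases h1V : V.card ≤ 1
      · -- constant case
        have hX2 : X ∈ D₂ := by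
          by_contra h
          rw [if_neg h] at hxM
          have hxinj : Function.Injective x := stmt16M3_inj hxM
          have : V.card = (stmt16agr x y).card :=
            Finset.card_image_of_injective _ hxinj
          omega
        have hY2 : Y ∈ D₂ := by
          by_contra h
          rw [if_neg h] at hyM
          have hyinj : Function.Injective y := stmt16M3_inj hyM
          have hVy : V = (stmt16agr x y).image y := by
            apply Finset.image_congr
            intro i hi
            exact (Finset.mem_filter.mp (Finset.mem_coe.mp hi)).2
          have : V.card = (stmt16agr x y).card := by
            rw [hVy, Finset.card_image_of_injective _ hyinj]
          omega
        rw [if_pos hX2] at hxM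
        rw [if_pos hY2] at hyM
        have hne : V.Nonempty := by
          apply Finset.image_nonempty.mpr
          rw [← Finset.card_pos]; omega
        obtain ⟨a, haV⟩ := hne
        have hVa : ∀ i ∈ stmt16agr x y, x i = a := by
          intro i hi
          have hx' : x i ∈ V := Finset.mem_image_of_mem x hi
          have : V = {a} := Finset.eq_singleton_iff_unique_mem.mpr
            ⟨haV, fun b hb => by
              by_contra hab
              have : 2 ≤ V.card := Finset.one_lt_card.mpr ⟨b, hb, a, haV, hab⟩
              omega⟩
          rw [this] at hx'
          exact Finset.mem_singleton.mp hx'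
        have hconstX : (fun _ => a : Fin 5 → Q) ∈ stmt16M2 X (h3blocks X hX3) :=
          stmt16M2_const (hVX haV)
        have hconstY : (fun _ => a : Fin 5 → Q) ∈ stmt16M2 Y (h3blocks Y hY3) :=
          stmt16M2_const (hVY haV)
        have hxa : x = fun _ => a := by
          apply stmt16M2_dist hxM hconstX
          refine le_trans hA (Finset.card_le_card ?_)
          intro i hi
          simp only [stmt16agr, Finset.mem_filter, Finset.mem_univ, true_and]
          exact hVa i hi
        have hya : y = fun _ => a := by
          apply stmt16M2_dist hyM hconstY
          refine le_trans hA (Finset.card_le_card ?_)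
          intro i hi
          simp only [stmt16agr, Finset.mem_filter, Finset.mem_univ, true_and]
          rw [← (Finset.mem_filter.mp hi).2]
          exact hVa i hi
        rw [hxa, hya]
      · -- the value set has at least two elements, so the blocks coincide
        have hXY : X = Y := by
          by_cases h3V : 3 ≤ V.card
          · obtain ⟨T, hTsub, hT3⟩ := Finset.exists_subset_card_eq h3V
            obtain ⟨Z, -, hZuniq⟩ := h3 T hT3
            exact (hZuniq X ⟨hX3, hTsub.trans hVX⟩).trans
              (hZuniq Y ⟨hY3, hTsub.trans hVY⟩).symm
          · -- exactly two values: both blocks are in `D₂`, use `h2`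
            have hV2 : V.card = 2 := by omega
            obtain ⟨Z, -, hZuniq⟩ := h2 V hV2
            have hX2 : X ∈ D₂ := by
              by_contra h
              rw [if_neg h] at hxM
              have hxinj : Function.Injective x := stmt16M3_inj hxM
              have : V.card = (stmt16agr x y).card :=
                Finset.card_image_of_injective _ hxinj
              omega
            have hY2 : Y ∈ D₂ := by
              by_contra h
              rw [if_neg h] at hyM
              have hyinj : Function.Injective y := stmt16M3_inj hyM
              have hVy : V = (stmt16agr x y).image y := by
                apply Finset.image_congr
                intro i hi
                exact (Finset.mem_filter.mp (Finset.mem_coe.mp hi)).2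
              have : V.card = (stmt16agr x y).card := by
                rw [hVy, Finset.card_image_of_injective _ hyinj]
              omega
            exact (hZuniq X ⟨hX2, hVX⟩).trans (hZuniq Y ⟨hY2, hVY⟩).symm
        subst hXY
        by_cases h : X ∈ D₂
        · rw [if_pos h] at hxM hyM
          exact stmt16M2_dist hxM hyM hA
        · rw [if_neg h] at hxM hyM
          exact stmt16M3_dist hxM hyM hA
    -- surjectivity of the projection onto the first three coordinates
    have hblock : ∀ a b c : Q, ∃ X ∈ D₃, a ∈ X ∧ b ∈ X ∧ c ∈ X ∧
        (X ∈ D₂ ∨ (a ≠ b ∧ a ≠ c ∧ b ≠ c)) := by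
      intro a b c
      by_cases hab : a = b
      · subst hab
        by_cases hac : a = c
        · subst hac
          obtain ⟨z, hz⟩ := Fintype.exists_ne_of_one_lt_card hq1 a
          obtain ⟨X, ⟨hX2, hTX⟩, -⟩ := h2 {a, z} (Finset.card_pair (Ne.symm hz))
          have haX : a ∈ X := hTX (Finset.mem_insert_self _ _)
          exact ⟨X, hsub hX2, haX, haX, haX, Or.inl hX2⟩
        · obtain ⟨X, ⟨hX2, hTX⟩, -⟩ := h2 {a, c} (Finset.card_pair hac)
          have haX : a ∈ X := hTX (Finset.mem_insert_self _ _)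
          have hcX : c ∈ X := hTX (by simp)
          exact ⟨X, hsub hX2, haX, haX, hcX, Or.inl hX2⟩
      · by_cases hac : a = c
        · subst hac
          obtain ⟨X, ⟨hX2, hTX⟩, -⟩ := h2 {a, b} (Finset.card_pair hab)
          have haX : a ∈ X := hTX (Finset.mem_insert_self _ _)
          have hbX : b ∈ X := hTX (by simp)
          exact ⟨X, hsub hX2, haX, hbX, haX, Or.inl hX2⟩
        · by_cases hbc : b = c
          · subst hbc
            obtain ⟨X, ⟨hX2, hTX⟩, -⟩ := h2 {a, b} (Finset.card_pair hab)
            have haX : a ∈ X := hTX (Finset.mem_insert_self _ _)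
            have hbX : b ∈ X := hTX (by simp)
            exact ⟨X, hsub hX2, haX, hbX, hbX, Or.inl hX2⟩
          · have hT3 : ({a, b, c} : Finset Q).card = 3 := by
              rw [Finset.card_insert_of_notMem (by simp [hab, hac]),
                Finset.card_pair hbc]
            obtain ⟨X, ⟨hX3, hTX⟩, -⟩ := h3 {a, b, c} hT3
            exact ⟨X, hX3, hTX (by simp), hTX (by simp), hTX (by simp),
              Or.inr ⟨hab, hac, hbc⟩⟩
    have surj : ∀ a b c : Q, ∃ x ∈ C, x 0 = a ∧ x 1 = b ∧ x 2 = c := by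
      intro a b c
      obtain ⟨X, hX3, haX, hbX, hcX, hcase⟩ := hblock a b c
      by_cases hX2 : X ∈ D₂
      · obtain ⟨a₀, ha₀⟩ := stmt16emb_surj X (h3blocks X hX3) haX
        obtain ⟨b₀, hb₀⟩ := stmt16emb_surj X (h3blocks X hX3) hbX
        obtain ⟨c₀, hc₀⟩ := stmt16emb_surj X (h3blocks X hX3) hcX
        refine ⟨stmt16emb X (h3blocks X hX3) ∘ stmt16cw a₀ b₀ c₀, ?_, ?_, ?_, ?_⟩
        · rw [hC, Finset.mem_biUnion]
          refine ⟨⟨X, hX3⟩, Finset.mem_attach _ _, ?_⟩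
          simp only [if_pos hX2]
          exact Finset.mem_image.mpr ⟨(a₀, b₀, c₀), Finset.mem_univ _, rfl⟩
        · show stmt16emb X _ (stmt16cw a₀ b₀ c₀ 0) = a
          exact ha₀
        · show stmt16emb X _ (stmt16cw a₀ b₀ c₀ 1) = b
          exact hb₀
        · show stmt16emb X _ (stmt16cw a₀ b₀ c₀ 2) = c
          exact hc₀
      · obtain ⟨hab, hac, hbc⟩ := hcase.resolve_left hX2
        obtain ⟨a₀, ha₀⟩ := stmt16emb_surj X (h3blocks X hX3) haX
        obtain ⟨b₀, hb₀⟩ := stmt16emb_surj X (h3blocks X hX3) hbX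
        obtain ⟨c₀, hc₀⟩ := stmt16emb_surj X (h3blocks X hX3) hcX
        have h1 : a₀ ≠ b₀ := fun h => hab (by rw [← ha₀, ← hb₀, h])
        have h2' : a₀ ≠ c₀ := fun h => hac (by rw [← ha₀, ← hc₀, h])
        have h3' : b₀ ≠ c₀ := fun h => hbc (by rw [← hb₀, ← hc₀, h])
        obtain ⟨σ, hσs, hσ0, hσ1, hσ2⟩ := stmt16perm_exists a₀ b₀ c₀ h1 h2' h3'
        refine ⟨stmt16emb X (h3blocks X hX3) ∘ σ, ?_, ?_, ?_, ?_⟩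
        · rw [hC, Finset.mem_biUnion]
          refine ⟨⟨X, hX3⟩, Finset.mem_attach _ _, ?_⟩
          simp only [if_neg hX2]
          exact Finset.mem_image.mpr
            ⟨σ, Finset.mem_filter.mpr ⟨Finset.mem_univ _, hσs⟩, rfl⟩
        · show stmt16emb X _ (σ 0) = a; rw [hσ0, ha₀]
        · show stmt16emb X _ (σ 1) = b; rw [hσ1, hb₀]
        · show stmt16emb X _ (σ 2) = c; rw [hσ2, hc₀]
    -- injectivity of the projection
    have hinj : ∀ x ∈ C, ∀ y ∈ C,
        x 0 = y 0 → x 1 = y 1 → x 2 = y 2 → x = y := by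
      intro x hx y hy e0 e1 e2
      apply key x hx y hy
      have hsub3 : ({0, 1, 2} : Finset (Fin 5)) ⊆ stmt16agr x y := by
        intro i hi
        simp only [stmt16agr, Finset.mem_filter, Finset.mem_univ, true_and]
        fin_cases hi <;> assumption
      calc (3 : ℕ) = ({0, 1, 2} : Finset (Fin 5)).card := by decide
        _ ≤ (stmt16agr x y).card := Finset.card_le_card hsub3
    refine ⟨C, ?_, ?_⟩
    · -- minimum distance 3
      intro x hx y hy hxy
      by_contra hcon
      push_neg at hcon
      apply hxy
      apply key x hx y hy
      have hsplit := Finset.card_filter_add_card_filter_not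
        (s := (Finset.univ : Finset (Fin 5))) (p := fun i => x i = y i)
      have hd : hammingDist x y = (Finset.univ.filter (fun i => ¬ x i = y i)).card := rfl
      have hcard : (Finset.univ : Finset (Fin 5)).card = 5 := by decide
      simp only [stmt16agr]
      omega
    · -- cardinality
      have hcards : C.card = (Finset.univ : Finset (Q × Q × Q)).card := by
        apply Finset.card_bij (fun x _ => ((x 0, x 1, x 2) : Q × Q × Q))
        · intro x hx; exact Finset.mem_univ _
        · intro x hx y hy h
          rw [Prod.mk.injEq, Prod.mk.injEq] at h
          exact hinj x hx y hy h.1 h.2.1 h.2.2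
        · intro p _
          obtain ⟨x, hx, e0, e1, e2⟩ := surj p.1 p.2.1 p.2.2
          exact ⟨x, hx, by rw [e0, e1, e2]⟩
      rw [hcards, Finset.card_univ, Fintype.card_prod, Fintype.card_prod, hq]
      ring
end
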